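/- Let (Γ, t) be a linear lambda term and let u be a subterm occurrence of t that is the function or the argument of an application occurring in t. Then the edge corresponding to u in the underlying rooted trivalent map of the lambda lifting of (Γ, t) is a bridge if and only if u is closed (has no free variables). Moreover, every bridge of the underlying rooted trivalent map of the lambda lifting arises in this way. -/

import Mathlib

/-! ## Lambda terms and linearity -/

inductive Term : Type
  | var : ℕ → Term
  | app : Term → Term → Term
  | lam : ℕ → Term → Term
deriving DecidableEq

namespace Term

/-- total number of applications and abstractions -/
def size : Term → ℕ
  | var _ => 0
  | app t u => size t + size u + 1
  | lam _ t => size t + 1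

def apps : Term → ℕ
  | var _ => 0
  | app t u => apps t + apps u + 1
  | lam _ t => apps t

def lams : Term → ℕ
  | var _ => 0
  | app t u => lams t + lams u
  | lam _ t => lams t + 1

/-- all variable names occurring in a term (free, bound or binding) -/
def varsList : Term → List ℕ
  | var z => [z]
  | app t u => varsList t ++ varsList u
  | lam z t => z :: varsList t

/-- the list of free variables -/
def freeList : Term → List ℕ
  | var z => [z]
  | app t u => freeList t ++ freeList u
  | lam z t => (freeList t).filter (fun y => y ≠ z)

/-- the list of bound (binder) variables -/
def boundVars : Term → List ℕ
  | var _ => []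
  | app t u => boundVars t ++ boundVars u
  | lam z t => z :: boundVars t

/-- rename the free occurrences of `x` to `y` -/
def rename (x y : ℕ) : Term → Term
  | var z => if z = x then var y else var z
  | app t u => app (rename x y t) (rename x y u)
  | lam z t => if z = x then lam z t else lam z (rename x y t)

/-- substitution of `u` for the free occurrences of `x` -/
def subst (u : Term) (x : ℕ) : Term → Term
  | var z => if z = x then u else var z
  | app t₁ t₂ => app (subst u x t₁) (subst u x t₂)
  | lam z t => if z = x then lam z t else lam z (subst u x t)

end Term

/-- the linearity relation `Γ ⊢ t` between contexts and lambda terms -/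
inductive Linear : List ℕ → Term → Prop
  | var (x : ℕ) : Linear [x] (.var x)
  | app {Γ Δ : List ℕ} {t u : Term} : Linear Γ t → Linear Δ u →
      (Γ ++ Δ).Nodup → Linear (Γ ++ Δ) (.app t u)
  | lam {Γ : List ℕ} {x : ℕ} {t : Term} : Linear (Γ ++ [x]) t → Linear Γ (.lam x t)
  | exch {Γ Δ : List ℕ} {x y : ℕ} {t : Term} :
      Linear (Γ ++ y :: x :: Δ) t → Linear (Γ ++ x :: y :: Δ) t

/-! ## Combinatorial maps -/

/-- the data of a candidate rooted trivalent map with boundary: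
a set of darts with functions `v`, `e`, a root dart and a boundary list -/
structure PreMap : Type 1 where
  carrier : Type
  v : carrier → carrier
  e : carrier → carrier
  root : carrier
  boundary : List carrier

/-- `M` is a rooted trivalent map with boundary: `v` and `e` generate a
transitive action of `Γ₃ = ⟨v, e ∣ v³ = e² = 1⟩`, the fixed points of `v` are
exactly the root and the fixed points of `e` are exactly the boundary. -/
structure IsRTMapB (M : PreMap) : Prop where
  v_cube : ∀ x, M.v (M.v (M.v x)) = x
  e_sq : ∀ x, M.e (M.e x) = x
  trans : ∀ x y, Relation.EqvGen (fun a b => M.v a = b ∨ M.e a = b) x y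
  v_fix : ∀ x, M.v x = x ↔ x = M.root
  e_fix : ∀ x, M.e x = x ↔ x ∈ M.boundary
  nodup : M.boundary.Nodup

/-- isomorphism of rooted maps with boundary -/
def MapIso (M M' : PreMap) : Prop :=
  ∃ h : M.carrier ≃ M'.carrier,
    (∀ x, h (M.v x) = M'.v (h x)) ∧ (∀ x, h (M.e x) = M'.e (h x)) ∧
    h M.root = M'.root ∧ M.boundary.map h = M'.boundary

/-! ## The underlying rooted trivalent map of a linear lambda term -/

namespace Term

/-- the subterm at a given position (`false` = function/body child, `true` = argument) -/
def sub? : Term → List Bool → Option Term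
  | t, [] => some t
  | .app t _, false :: p => sub? t p
  | .app _ u, true :: p => sub? u p
  | .lam _ t, false :: p => sub? t p
  | _, _ => none

/-- positions of the application and abstraction nodes of a term -/
def nodes : Term → List (List Bool)
  | .var _ => []
  | .app t u => [] :: ((nodes t).map (false :: ·) ++ (nodes u).map (true :: ·))
  | .lam _ t => [] :: (nodes t).map (false :: ·)

/-- all positions of subterm occurrences -/
def allPos : Term → List (List Bool)
  | .var _ => [[]]
  | .app t u => [] :: ((allPos t).map (false :: ·) ++ (allPos u).map (true :: ·))
  | .lam _ t => [] :: (allPos t).map (false :: ·)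

def isLamOf (t : Term) (x : ℕ) (p : List Bool) : Bool :=
  match sub? t p with
  | some (.lam y _) => y == x
  | _ => false

/-- the position of the binder of the variable occurrence at position `q`
(`none` if that occurrence is free, or if there is no variable there) -/
def binderPos (t : Term) (q : List Bool) : Option (List Bool) :=
  match sub? t q with
  | some (.var x) =>
      (((List.range q.length).map (fun i => q.take i)).reverse).find? (isLamOf t x)
  | _ => none

/-! Dart indices: `0` is the dart of the root vertex, and `1 + 3*j + i` is
port `i` of the `j`-th node (around an application node, ports `0,1,2` are
function, argument, continuation; around an abstraction node they are
body, parameter, root). -/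

/-- the dart at the lower end of the wire of the subterm occurrence at `p` -/
def dnIdx (t : Term) (p : List Bool) : ℕ :=
  match p.getLast? with
  | none => 0
  | some d =>
    let q := p.dropLast
    let port : ℕ :=
      match sub? t q with
      | some (.app _ _) => if d then 1 else 0
      | _ => 0
    1 + 3 * ((nodes t).idxOf q) + port

/-- the dart at the upper end of the wire of the subterm occurrence at `p` -/
def topIdx (t : Term) (p : List Bool) : ℕ :=
  match sub? t p with
  | some (.var _) =>
      match binderPos t p with
      | some q => 1 + 3 * ((nodes t).idxOf q) + 1
      | none => dnIdx t p
  | some _ => 1 + 3 * ((nodes t).idxOf p) + 2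
  | none => 0

/-- the position of the occurrence of the variable `x` bound by the abstraction at `p` -/
def occOf (t : Term) (p : List Bool) (x : ℕ) : Option (List Bool) :=
  (allPos t).find? (fun q => decide (sub? t q = some (.var x) ∧ binderPos t q = some p))

/-- the position of the free occurrence of the variable `x` -/
def freeOcc (t : Term) (x : ℕ) : Option (List Bool) :=
  (allPos t).find? (fun q => decide (sub? t q = some (.var x) ∧ binderPos t q = none))

/-- the edge involution on dart indices -/
def eIdx (t : Term) (d : ℕ) : ℕ :=
  if d = 0 then topIdx t []
  else
    let j := (d - 1) / 3
    let i := (d - 1) % 3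
    match (nodes t)[j]? with
    | none => d
    | some p =>
      match sub? t p with
      | some (.app _ _) =>
          if i = 0 then topIdx t (p ++ [false])
          else if i = 1 then topIdx t (p ++ [true])
          else dnIdx t p
      | some (.lam x _) =>
          if i = 0 then topIdx t (p ++ [false])
          else if i = 1 then
            match occOf t p x with
            | some q => dnIdx t q
            | none => d
          else dnIdx t p
      | _ => d

end Term

/-- the underlying rooted trivalent map (with boundary) of a linear lambda
term `(Γ, t)`: application and abstraction nodes become trivalent vertices
(with the counterclockwise ordering of ports fixed by the convention above),
a univalent vertex (dart `0`) is attached at the end of the outgoing root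
wire, and the darts of the dangling input wires, in the order of the context
`Γ`, form the boundary. -/
def underlying (Γ : List ℕ) (t : Term) : PreMap where
  carrier := Fin (3 * (Term.nodes t).length + 1)
  v := fun d =>
    if d.val = 0 then d
    else ⟨(1 + 3 * ((d.val - 1) / 3) + ((d.val - 1) % 3 + 2) % 3) %
            (3 * (Term.nodes t).length + 1), Nat.mod_lt _ (by omega)⟩
  e := fun d => ⟨Term.eIdx t d.val % (3 * (Term.nodes t).length + 1),
                 Nat.mod_lt _ (by omega)⟩
  root := ⟨0, by omega⟩
  boundary := Γ.map (fun x =>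
    ⟨(match Term.freeOcc t x with
      | some q => Term.dnIdx t q
      | none => 0) % (3 * (Term.nodes t).length + 1), Nat.mod_lt _ (by omega)⟩)

/-! ## Bridges -/

/-- connectivity of the darts `a`, `b` avoiding the edge `{x, e x}` -/
def EdgeConn (M : PreMap) (x : M.carrier) (a b : M.carrier) : Prop :=
  Relation.EqvGen (fun u w => M.v u = w ∨ (M.e u = w ∧ u ≠ x ∧ u ≠ M.e x)) a b

/-- the edge `{x, e x}` is a bridge: it is a real edge, it is not the edge
incident to the root vertex, and its removal disconnects the underlying graph -/
def IsBridge (M : PreMap) (x : M.carrier) : Prop :=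
  M.e x ≠ x ∧ x ≠ M.root ∧ x ≠ M.e M.root ∧ ¬ ∀ a b, EdgeConn M x a b

def Bridgeless (M : PreMap) : Prop := ∀ x, ¬ IsBridge M x


/-- the lambda lifting `λx₁[⋯ λx_k[t] ⋯]` of a linear lambda term `(Γ, t)` -/
def lambdaLift (Γ : List ℕ) (t : Term) : Term := Γ.foldr Term.lam t

/-- the dart at the lower end of the wire of the subterm occurrence at
position `P`, as an element of the underlying map -/
def dartOf (Γ : List ℕ) (t : Term) (P : List Bool) : (underlying Γ t).carrier :=
  ⟨Term.dnIdx t P % (3 * (Term.nodes t).length + 1), Nat.mod_lt _ (by omega)⟩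

/-! ## Auxiliary development -/

namespace Term

theorem sub?_nil (t : Term) : sub? t [] = some t := by cases t <;> rfl

theorem sub?_append (t : Term) (p q : List Bool) :
    sub? t (p ++ q) = (sub? t p).bind (fun u => sub? u q) := by
  induction p generalizing t with
  | nil => simp [sub?]
  | cons c p ih =>
    cases t with
    | var x => cases c <;> simp [sub?]
    | app a b => cases c <;> simp [sub?, ih]
    | lam z b => cases c <;> simp [sub?, ih]

theorem sub?_concat (t : Term) (q : List Bool) (d : Bool) :
    sub? t (q ++ [d]) = (sub? t q).bind (fun w => sub? w [d]) := sub?_append t q [d]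

theorem sub?_cons (t : Term) (c : Bool) (p : List Bool) :
    sub? t (c :: p) = (sub? t [c]).bind (fun u => sub? u p) := sub?_append t [c] p

theorem sub?_var {z : ℕ} {p : List Bool} {u : Term} (h : sub? (var z) p = some u) :
    p = [] ∧ u = var z := by
  cases p with
  | nil => simp [sub?] at h; exact ⟨rfl, h.symm⟩
  | cons c p => cases c <;> simp [sub?] at h

theorem child_shape {w u : Term} {d : Bool} (h : sub? w [d] = some u) :
    (∃ a b, w = app a b) ∨ (∃ z b, w = lam z b ∧ d = false ∧ u = b) := by
  cases w with
  | var z => cases d <;> simp [sub?] at h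
  | app a b => exact Or.inl ⟨a, b, rfl⟩
  | lam z b =>
    cases d with
    | false => simp [sub?] at h; exact Or.inr ⟨z, b, rfl, rfl, h.symm⟩
    | true => simp [sub?] at h

theorem mem_allPos {t : Term} {p : List Bool} :
    p ∈ allPos t ↔ ∃ u, sub? t p = some u := by
  induction t generalizing p with
  | var z =>
    cases p with
    | nil => simp [allPos, sub?]
    | cons c p => cases c <;> simp [allPos, sub?]
  | app a b iha ihb =>
    cases p with
    | nil => simp [allPos, sub?]
    | cons c p => cases c <;> simp [allPos, sub?, iha, ihb]
  | lam z b ihb =>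
    cases p with
    | nil => simp [allPos, sub?]
    | cons c p => cases c <;> simp [allPos, sub?, ihb]

theorem mem_nodes {t : Term} {p : List Bool} :
    p ∈ nodes t ↔ (∃ a b, sub? t p = some (app a b)) ∨ (∃ z b, sub? t p = some (lam z b)) := by
  induction t generalizing p with
  | var z =>
    cases p with
    | nil => simp [nodes, sub?]
    | cons c p => cases c <;> simp [nodes, sub?]
  | app a b iha ihb =>
    cases p with
    | nil => simp [nodes, sub?]
    | cons c p => cases c <;> simp [nodes, sub?, iha, ihb]
  | lam z b ihb =>
    cases p with
    | nil => simp [nodes, sub?]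
    | cons c p => cases c <;> simp [nodes, sub?, ihb]

theorem nodes_nodup (t : Term) : (nodes t).Nodup := by
  induction t with
  | var z => simp [nodes]
  | app a b iha ihb =>
    simp only [nodes, List.nodup_cons, List.nodup_append]
    refine ⟨by simp, ?_, ?_, ?_⟩
    · exact iha.map (fun x y h => by simpa using h)
    · exact ihb.map (fun x y h => by simpa using h)
    · intro x hx y hy
      simp only [List.mem_map] at hx hy
      obtain ⟨px, _, rfl⟩ := hx
      obtain ⟨py, _, h⟩ := hy
      simp [← h]
  | lam z b ihb =>
    simp only [nodes, List.nodup_cons]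
    refine ⟨by simp, ihb.map (fun x y h => by simpa using h)⟩

end Term
namespace Term

/-- the prefix-search underlying `binderPos` -/
def prefF (t : Term) (y : ℕ) (q : List Bool) : Option (List Bool) :=
  (((List.range q.length).map (fun i => q.take i)).reverse).find? (isLamOf t y)

theorem binderPos_eq_prefF {t : Term} {q : List Bool} {y : ℕ}
    (h : sub? t q = some (var y)) : binderPos t q = prefF t y q := by
  simp only [binderPos, h, prefF]

theorem binderPos_eq_none {t : Term} {q : List Bool} {u : Term}
    (h : sub? t q = some u) (hu : ∀ y, u ≠ var y) : binderPos t q = none := by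
  unfold binderPos
  rw [h]
  cases u with
  | var y => exact absurd rfl (hu y)
  | app a b => rfl
  | lam z b => rfl

theorem isLamOf_iff {t : Term} {y : ℕ} {s : List Bool} :
    isLamOf t y s = true ↔ ∃ b, sub? t s = some (lam y b) := by
  unfold isLamOf
  cases h : sub? t s with
  | none => simp
  | some w =>
    cases w with
    | var z => simp
    | app a b => simp
    | lam z b =>
      simp only [beq_iff_eq, Option.some.injEq]
      constructor
      · rintro rfl; exact ⟨b, rfl⟩
      · rintro ⟨b', hb⟩; cases hb; rfl

theorem prefF_nil (t : Term) (y : ℕ) : prefF t y [] = none := rfl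

theorem prefF_prefix {t : Term} {y : ℕ} {P s : List Bool} (h : prefF t y P = some s) :
    s <+: P ∧ s.length < P.length ∧ ∃ b, sub? t s = some (lam y b) := by
  have hmem := List.mem_of_find?_eq_some h
  have hpred := List.find?_some h
  simp only [List.mem_reverse, List.mem_map, List.mem_range] at hmem
  obtain ⟨i, hi, rfl⟩ := hmem
  refine ⟨List.take_prefix _ _, ?_, isLamOf_iff.mp hpred⟩
  simpa using lt_of_le_of_lt (Nat.min_le_left i P.length) hi

/-- the key decomposition of the prefix search along a subterm decomposition -/
theorem prefF_append {t u : Term} {P : List Bool} (h : sub? t P = some u) (y : ℕ)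
    (r : List Bool) :
    prefF t y (P ++ r) = ((prefF u y r).map (P ++ ·)).or (prefF t y P) := by
  have hlist : ((List.range (P ++ r).length).map (fun i => (P ++ r).take i)).reverse
      = (((List.range r.length).map (fun i => r.take i)).map (P ++ ·)).reverse
        ++ ((List.range P.length).map (fun i => P.take i)).reverse := by
    rw [← List.reverse_append]
    congr 1
    rw [List.length_append, List.range_add, List.map_append, List.map_map, List.map_map]
    congr 1
    · apply List.map_congr_left
      intro i hi
      simp only [List.mem_range] at hi
      exact List.take_append_of_le_length (le_of_lt hi)
    · apply List.map_congr_left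
      intro i _
      simp only [Function.comp]
      exact List.take_length_add_append i
  rw [prefF, hlist, List.find?_append]
  congr 1
  rw [← List.map_reverse, List.find?_map]
  have : (isLamOf t y ∘ (P ++ ·)) = isLamOf u y := by
    funext s
    simp only [Function.comp]
    unfold isLamOf
    rw [sub?_append, h]
    rfl
  rw [this, prefF]

theorem prefF_single {t : Term} {y : ℕ} (c : Bool) :
    prefF t y [c] = if isLamOf t y [] then some [] else none := by
  unfold prefF
  simp [List.find?]

theorem isLamOf_nil_app {a b : Term} {y : ℕ} : isLamOf (app a b) y [] = false := rfl
theorem isLamOf_nil_var {z y : ℕ} : isLamOf (var z) y [] = false := rfl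
theorem isLamOf_nil_lam {z y : ℕ} {b : Term} : isLamOf (lam z b) y [] = (z == y) := rfl

theorem prefF_cons {t tc : Term} {c : Bool} (hc : sub? t [c] = some tc) (y : ℕ)
    (r : List Bool) :
    prefF t y (c :: r)
      = ((prefF tc y r).map (c :: ·)).or (if isLamOf t y [] then some [] else none) := by
  have := prefF_append hc y r
  simpa [prefF_single] using this

theorem prefF_app_false {a b : Term} {y : ℕ} {r : List Bool} :
    prefF (app a b) y (false :: r) = (prefF a y r).map (false :: ·) := by
  rw [prefF_cons (tc := a) (by simp [sub?, sub?_nil]), isLamOf_nil_app]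
  simp

theorem prefF_app_true {a b : Term} {y : ℕ} {r : List Bool} :
    prefF (app a b) y (true :: r) = (prefF b y r).map (true :: ·) := by
  rw [prefF_cons (tc := b) (by simp [sub?, sub?_nil]), isLamOf_nil_app]
  simp

theorem prefF_lam {z : ℕ} {b : Term} {y : ℕ} {r : List Bool} :
    prefF (lam z b) y (false :: r)
      = ((prefF b y r).map (false :: ·)).or (if z = y then some [] else none) := by
  rw [prefF_cons (tc := b) (by simp [sub?, sub?_nil]), isLamOf_nil_lam]
  by_cases h : z = y <;> simp [h]

/-- `r` is the position of an occurrence of `y` in `u` that is free in `u` -/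
def FreeOcc (u : Term) (y : ℕ) (r : List Bool) : Prop :=
  sub? u r = some (var y) ∧ prefF u y r = none

theorem mem_freeList_iff {u : Term} {y : ℕ} :
    y ∈ freeList u ↔ ∃ r, FreeOcc u y r := by
  induction u with
  | var z =>
    simp only [freeList, List.mem_singleton, FreeOcc]
    constructor
    · rintro rfl; exact ⟨[], by simp [sub?_nil], prefF_nil _ _⟩
    · rintro ⟨r, hr, -⟩
      obtain ⟨rfl, hv⟩ := sub?_var hr
      simp [sub?_nil] at hr
      exact hr.symm
  | app a b iha ihb =>
    simp only [freeList, List.mem_append, iha, ihb, FreeOcc]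
    constructor
    · rintro (⟨r, h1, h2⟩ | ⟨r, h1, h2⟩)
      · exact ⟨false :: r, by simpa [sub?] using h1, by simp [prefF_app_false, h2]⟩
      · exact ⟨true :: r, by simpa [sub?] using h1, by simp [prefF_app_true, h2]⟩
    · rintro ⟨r, h1, h2⟩
      cases r with
      | nil => simp [sub?_nil] at h1
      | cons c r =>
        cases c with
        | false =>
          rw [prefF_app_false] at h2
          exact Or.inl ⟨r, by simpa [sub?] using h1, by simpa using h2⟩
        | true =>
          rw [prefF_app_true] at h2
          exact Or.inr ⟨r, by simpa [sub?] using h1, by simpa using h2⟩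
  | lam z b ihb =>
    simp only [freeList, List.mem_filter, ihb, FreeOcc, decide_eq_true_eq]
    constructor
    · rintro ⟨⟨r, h1, h2⟩, hyz⟩
      refine ⟨false :: r, by simpa [sub?] using h1, ?_⟩
      rw [prefF_lam, h2]
      have : z ≠ y := fun h => hyz h.symm
      simp [this]
    · rintro ⟨r, h1, h2⟩
      cases r with
      | nil => simp [sub?_nil] at h1
      | cons c r =>
        cases c with
        | false =>
          rw [prefF_lam] at h2
          cases h4 : prefF b y r with
          | some s => rw [h4] at h2; simp at h2
          | none =>
            rw [h4] at h2
            simp only [Option.map_none, Option.none_or] at h2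
            have hzy : z ≠ y := by
              intro h; rw [if_pos h] at h2; cases h2
            exact ⟨⟨r, by simpa [sub?] using h1, h4⟩, fun h => hzy h.symm⟩
        | true => simp [sub?] at h1
  
end Term
namespace Term

theorem linear_nodup_perm {Γ : List ℕ} {t : Term} (h : Linear Γ t) :
    Γ.Nodup ∧ (freeList t).Perm Γ := by
  induction h with
  | var x => exact ⟨by simp, List.Perm.refl _⟩
  | app ht hu hnd iht ihu =>
    exact ⟨hnd, List.Perm.append iht.2 ihu.2⟩
  | @lam Γ x t ht iht =>
    obtain ⟨hnd, hperm⟩ := iht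
    have hxΓ : x ∉ Γ := by
      simp only [List.nodup_append] at hnd
      intro hx
      exact hnd.2.2 x hx x (List.mem_singleton_self x) rfl
    constructor
    · exact (List.nodup_append.mp hnd).1
    · have h1 : ((freeList t).filter (fun y => y ≠ x)).Perm ((Γ ++ [x]).filter (fun y => y ≠ x)) :=
        hperm.filter _
      have h2 : (Γ ++ [x]).filter (fun y => y ≠ x) = Γ := by
        rw [List.filter_append]
        have hΓ : Γ.filter (fun y => y ≠ x) = Γ := by
          apply List.filter_eq_self.mpr
          intro y hy
          simp only [ne_eq, decide_not, Bool.not_eq_true', decide_eq_false_iff_not]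
          intro h
          exact hxΓ (h ▸ hy)
        rw [hΓ]
        simp
      rw [h2] at h1
      simpa [freeList] using h1
  | @exch Γ Δ x y t ht iht =>
    obtain ⟨hnd, hperm⟩ := iht
    have hp : (Γ ++ y :: x :: Δ).Perm (Γ ++ x :: y :: Δ) :=
      List.Perm.append_left Γ (List.Perm.swap x y Δ)
    exact ⟨hnd.perm hp, hperm.trans hp⟩

theorem linear_sub {Γ : List ℕ} {t : Term} (h : Linear Γ t) :
    ∀ p u, sub? t p = some u → ∃ Δ, Linear Δ u := by
  induction h with
  | var x =>
    intro p u hp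
    obtain ⟨rfl, rfl⟩ := sub?_var hp
    exact ⟨[x], Linear.var x⟩
  | @app Γ Δ t u ht hu hnd iht ihu =>
    intro p w hp
    cases p with
    | nil => rw [sub?_nil] at hp; cases hp; exact ⟨Γ ++ Δ, Linear.app ht hu hnd⟩
    | cons c p =>
      cases c with
      | false => exact iht p w (by simpa [sub?] using hp)
      | true => exact ihu p w (by simpa [sub?] using hp)
  | @lam Γ x t ht iht =>
    intro p w hp
    cases p with
    | nil => rw [sub?_nil] at hp; cases hp; exact ⟨Γ, Linear.lam ht⟩
    | cons c p =>
      cases c with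
      | false => exact iht p w (by simpa [sub?] using hp)
      | true => simp [sub?] at hp
  | exch ht iht => exact iht

theorem linear_lam_free {Δ : List ℕ} {s : Term} (h : Linear Δ s) :
    ∀ z b, s = lam z b → z ∈ freeList b := by
  induction h with
  | var x => intro z b h; cases h
  | app _ _ _ _ _ => intro z b h; cases h
  | @lam Γ x t ht _ =>
    intro z b h
    cases h
    have := (linear_nodup_perm ht).2
    exact (this.mem_iff).mpr (by simp)
  | exch _ iht => exact iht

theorem lam_node_free {Γ : List ℕ} {t : Term} (h : Linear Γ t) {p : List Bool} {z : ℕ}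
    {b : Term} (hp : sub? t p = some (lam z b)) : z ∈ freeList b := by
  obtain ⟨Δ, hΔ⟩ := linear_sub h p _ hp
  exact linear_lam_free hΔ z b rfl

theorem freeOcc_unique {Γ : List ℕ} {t : Term} (h : Linear Γ t) :
    ∀ y r₁ r₂, FreeOcc t y r₁ → FreeOcc t y r₂ → r₁ = r₂ := by
  induction h with
  | var x =>
    intro y r₁ r₂ h₁ h₂
    obtain ⟨rfl, -⟩ := sub?_var h₁.1
    obtain ⟨rfl, -⟩ := sub?_var h₂.1
    rfl
  | @app Γ Δ t u ht hu hnd iht ihu =>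
    intro y r₁ r₂ h₁ h₂
    have hdisj : ∀ w, w ∈ freeList t → w ∈ freeList u → False := by
      intro w hwt hwu
      have h1 := (linear_nodup_perm ht).2.mem_iff.mp hwt
      have h2 := (linear_nodup_perm hu).2.mem_iff.mp hwu
      exact (List.disjoint_of_nodup_append hnd) h1 h2
    have occ_cases : ∀ r, FreeOcc (app t u) y r →
        (∃ r', r = false :: r' ∧ FreeOcc t y r') ∨ (∃ r', r = true :: r' ∧ FreeOcc u y r') := by
      rintro r ⟨hr1, hr2⟩
      cases r with
      | nil => rw [sub?_nil] at hr1; cases hr1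
      | cons c r' =>
        cases c with
        | false =>
          rw [prefF_app_false] at hr2
          exact Or.inl ⟨r', rfl, by simpa [sub?] using hr1, by simpa using hr2⟩
        | true =>
          rw [prefF_app_true] at hr2
          exact Or.inr ⟨r', rfl, by simpa [sub?] using hr1, by simpa using hr2⟩
    rcases occ_cases r₁ h₁ with ⟨r₁', rfl, ho₁⟩ | ⟨r₁', rfl, ho₁⟩ <;>
      rcases occ_cases r₂ h₂ with ⟨r₂', rfl, ho₂⟩ | ⟨r₂', rfl, ho₂⟩
    · rw [iht y r₁' r₂' ho₁ ho₂]
    · exact absurd (hdisj y (mem_freeList_iff.mpr ⟨r₁', ho₁⟩) (mem_freeList_iff.mpr ⟨r₂', ho₂⟩)) not_false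
    · exact absurd (hdisj y (mem_freeList_iff.mpr ⟨r₂', ho₂⟩) (mem_freeList_iff.mpr ⟨r₁', ho₁⟩)) not_false
    · rw [ihu y r₁' r₂' ho₁ ho₂]
  | @lam Γ x t ht iht =>
    intro y r₁ r₂ h₁ h₂
    have occ_cases : ∀ r, FreeOcc (lam x t) y r →
        ∃ r', r = false :: r' ∧ FreeOcc t y r' := by
      rintro r ⟨hr1, hr2⟩
      cases r with
      | nil => rw [sub?_nil] at hr1; cases hr1
      | cons c r' =>
        cases c with
        | false =>
          rw [prefF_lam] at hr2
          cases h4 : prefF t y r' with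
          | some s => rw [h4] at hr2; simp at hr2
          | none => exact ⟨r', rfl, by simpa [sub?] using hr1, h4⟩
        | true => simp [sub?] at hr1
    obtain ⟨r₁', rfl, ho₁⟩ := occ_cases r₁ h₁
    obtain ⟨r₂', rfl, ho₂⟩ := occ_cases r₂ h₂
    rw [iht y r₁' r₂' ho₁ ho₂]
  | exch _ iht => exact iht

end Term
namespace Term

/-- decomposition of a bound occurrence -/
theorem binder_decomp {t : Term} {q s : List Bool} {y : ℕ}
    (hq : sub? t q = some (var y)) (hb : binderPos t q = some s) :
    ∃ b r, sub? t s = some (lam y b) ∧ q = s ++ false :: r ∧ FreeOcc b y r := by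
  rw [binderPos_eq_prefF hq] at hb
  obtain ⟨hpre, hlen, b, hs⟩ := prefF_prefix hb
  obtain ⟨rest, rfl⟩ := hpre
  cases rest with
  | nil => simp at hlen
  | cons c r =>
    have hsub : sub? (lam y b) (c :: r) = some (var y) := by
      have h' := hq; rw [sub?_append, hs] at h'; simpa using h'
    cases c with
    | true => simp [sub?] at hsub
    | false =>
      have hsub' : sub? b r = some (var y) := by simpa [sub?] using hsub
      refine ⟨b, r, hs, rfl, hsub', ?_⟩
      rw [prefF_append hs y (false :: r), prefF_lam] at hb
      cases h4 : prefF b y r with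
      | none => rfl
      | some s' =>
        rw [h4] at hb
        simp at hb
  
theorem binder_comp {t b : Term} {s r : List Bool} {y : ℕ}
    (hs : sub? t s = some (lam y b)) (hf : FreeOcc b y r) :
    sub? t (s ++ false :: r) = some (var y) ∧ binderPos t (s ++ false :: r) = some s := by
  have hsub : sub? t (s ++ false :: r) = some (var y) := by
    rw [sub?_append, hs]; simpa [sub?] using hf.1
  refine ⟨hsub, ?_⟩
  rw [binderPos_eq_prefF hsub, prefF_append hs, prefF_lam, hf.2]
  simp

theorem binder_total {t : Term} (h : Linear [] t) {q : List Bool} {y : ℕ}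
    (hq : sub? t q = some (var y)) : ∃ s, binderPos t q = some s := by
  cases hb : binderPos t q with
  | some s => exact ⟨s, rfl⟩
  | none =>
    rw [binderPos_eq_prefF hq] at hb
    have h1 : y ∈ freeList t := mem_freeList_iff.mpr ⟨q, hq, hb⟩
    have h2 := (linear_nodup_perm h).2.mem_iff.mp h1
    simp at h2

theorem occOf_eq {Γ : List ℕ} {t : Term} (h : Linear Γ t) {s q : List Bool} {z : ℕ} {b : Term}
    (hs : sub? t s = some (lam z b)) (hq : sub? t q = some (var z))
    (hb : binderPos t q = some s) : occOf t s z = some q := by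
  have huniq : ∀ q', sub? t q' = some (var z) → binderPos t q' = some s → q' = q := by
    intro q' h1 h2
    obtain ⟨b₁, r₁, hs₁, rfl, hf₁⟩ := binder_decomp h1 h2
    obtain ⟨b₂, r₂, hs₂, hq₂, hf₂⟩ := binder_decomp hq hb
    rw [hs] at hs₁ hs₂
    simp only [Option.some.injEq, lam.injEq] at hs₁ hs₂
    rw [← hs₁.2] at hf₁
    rw [← hs₂.2] at hf₂
    obtain ⟨Δ, hΔ⟩ := linear_sub h (s ++ [false]) b
      (by rw [sub?_append, hs]; simp [sub?, sub?_nil])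
    rw [hq₂, freeOcc_unique hΔ z r₁ r₂ hf₁ hf₂]
  unfold occOf
  cases hfind : (allPos t).find?
      (fun q' => decide (sub? t q' = some (var z) ∧ binderPos t q' = some s)) with
  | some q' =>
    have hp := List.find?_some hfind
    simp only [decide_eq_true_eq] at hp
    rw [huniq q' hp.1 hp.2]
  | none =>
    exfalso
    have hnone := List.find?_eq_none.mp hfind q (mem_allPos.mpr ⟨_, hq⟩)
    simp only [decide_eq_true_eq] at hnone
    exact hnone ⟨hq, hb⟩

theorem occ_exists {Γ : List ℕ} {t : Term} (h : Linear Γ t) {s : List Bool} {z : ℕ} {b : Term}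
    (hs : sub? t s = some (lam z b)) :
    ∃ q, sub? t q = some (var z) ∧ binderPos t q = some s ∧ occOf t s z = some q := by
  have hz : z ∈ freeList b := lam_node_free h hs
  obtain ⟨r, hf⟩ := mem_freeList_iff.mp hz
  obtain ⟨h1, h2⟩ := binder_comp hs hf
  exact ⟨s ++ false :: r, h1, h2, occOf_eq h hs h1 h2⟩

end Term
namespace Term

theorem beq_inst_eq : (List.instBEq : BEq (List Bool)) = instBEqOfDecidableEq :=
  lawful_beq_subsingleton _ _

theorem nidx_lt {t : Term} {p : List Bool} (hp : p ∈ nodes t) :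
    (nodes t).idxOf p < (nodes t).length := by
  exact List.idxOf_lt_length_iff.mpr hp

theorem nidx_get {t : Term} {p : List Bool} (hp : p ∈ nodes t) :
    (nodes t)[(nodes t).idxOf p]? = some p := by
  rw [List.getElem?_eq_getElem (List.idxOf_lt_length_iff.mpr hp), List.getElem_idxOf]

theorem nidx_inj {t : Term} {p q : List Bool} (hp : p ∈ nodes t) (hq : q ∈ nodes t)
    (h : (nodes t).idxOf p = (nodes t).idxOf q) : p = q := by
  exact (List.idxOf_inj hp).mp h

theorem eq_nil_or_append (p : List Bool) : p = [] ∨ ∃ q d, p = q ++ [d] := by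
  rcases List.eq_nil_or_concat p with h | ⟨q, d, h⟩
  · exact Or.inl h
  · exact Or.inr ⟨q, d, by simpa [List.concat_eq_append] using h⟩

theorem parent_node {t u : Term} {q : List Bool} {d : Bool}
    (h : sub? t (q ++ [d]) = some u) :
    q ∈ nodes t ∧ ((∃ a b, sub? t q = some (app a b)) ∨
      (∃ z b, sub? t q = some (lam z b) ∧ d = false ∧ u = b)) := by
  rw [sub?_concat] at h
  cases hw : sub? t q with
  | none => rw [hw] at h; simp at h
  | some w =>
    rw [hw] at h
    simp only [Option.bind_eq_bind, Option.bind_some] at h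
    rcases child_shape h with ⟨a, b, rfl⟩ | ⟨z, b, rfl, rfl, hub⟩
    · exact ⟨mem_nodes.mpr (Or.inl ⟨a, b, hw⟩), Or.inl ⟨a, b, rfl⟩⟩
    · exact ⟨mem_nodes.mpr (Or.inr ⟨z, b, hw⟩), Or.inr ⟨z, b, rfl, rfl, hub⟩⟩

theorem dnIdx_nil (t : Term) : dnIdx t [] = 0 := rfl

theorem dnIdx_concat_app {t a b : Term} {q : List Bool} (hq : sub? t q = some (app a b))
    (d : Bool) :
    dnIdx t (q ++ [d]) = 1 + 3 * (nodes t).idxOf q + (if d then 1 else 0) := by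
  simp only [dnIdx, List.getLast?_concat, List.dropLast_concat, hq]

theorem dnIdx_concat_app_f {t a b : Term} {q : List Bool} (hq : sub? t q = some (app a b)) :
    dnIdx t (q ++ [false]) = 1 + 3 * (nodes t).idxOf q := by
  rw [dnIdx_concat_app hq]; simp

theorem dnIdx_concat_app_t {t a b : Term} {q : List Bool} (hq : sub? t q = some (app a b)) :
    dnIdx t (q ++ [true]) = 1 + 3 * (nodes t).idxOf q + 1 := by
  rw [dnIdx_concat_app hq]; simp

theorem dnIdx_concat_lam {t b : Term} {z : ℕ} {q : List Bool} (hq : sub? t q = some (lam z b))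
    (d : Bool) : dnIdx t (q ++ [d]) = 1 + 3 * (nodes t).idxOf q := by
  simp only [dnIdx, List.getLast?_concat, List.dropLast_concat, hq]
  rfl

theorem topIdx_app {t a b : Term} {p : List Bool} (hp : sub? t p = some (app a b)) :
    topIdx t p = 1 + 3 * (nodes t).idxOf p + 2 := by
  simp only [topIdx, hp]

theorem topIdx_lam {t b : Term} {z : ℕ} {p : List Bool} (hp : sub? t p = some (lam z b)) :
    topIdx t p = 1 + 3 * (nodes t).idxOf p + 2 := by
  simp only [topIdx, hp]

theorem topIdx_var {t : Term} {p s : List Bool} {y : ℕ} (hp : sub? t p = some (var y))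
    (hb : binderPos t p = some s) :
    topIdx t p = 1 + 3 * (nodes t).idxOf s + 1 := by
  simp only [topIdx, hp, hb]

theorem dnIdx_lt {t u : Term} {p : List Bool} (hp : sub? t p = some u) :
    dnIdx t p < 3 * (nodes t).length + 1 := by
  rcases eq_nil_or_append p with rfl | ⟨q, d, rfl⟩
  · rw [dnIdx_nil]; omega
  · obtain ⟨hqmem, hshape⟩ := parent_node hp
    have hlt := nidx_lt hqmem
    rcases hshape with ⟨a, b, hq⟩ | ⟨z, b, hq, rfl, rfl⟩
    · rw [dnIdx_concat_app hq]; cases d <;> simp <;> omega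
    · rw [dnIdx_concat_lam hq]; omega

theorem topIdx_lt {t u : Term} {p : List Bool} (hL : Linear [] t) (hp : sub? t p = some u) :
    topIdx t p < 3 * (nodes t).length + 1 := by
  cases u with
  | var y =>
    obtain ⟨s, hb⟩ := binder_total hL hp
    obtain ⟨b, r, hs, -, -⟩ := binder_decomp hp hb
    have := nidx_lt (mem_nodes.mpr (Or.inr ⟨y, b, hs⟩))
    rw [topIdx_var hp hb]; omega
  | app a b =>
    have := nidx_lt (mem_nodes.mpr (Or.inl ⟨a, b, hp⟩))
    rw [topIdx_app hp]; omega
  | lam z b =>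
    have := nidx_lt (mem_nodes.mpr (Or.inr ⟨z, b, hp⟩))
    rw [topIdx_lam hp]; omega

theorem eIdx_zero (t : Term) : eIdx t 0 = topIdx t [] := by simp [eIdx]

/-- generic evaluation of `eIdx` at a dart code -/
theorem eIdx_at {t : Term} {j : ℕ} {p : List Bool} (hget : (nodes t)[j]? = some p)
    {i : ℕ} (hi : i < 3) :
    eIdx t (1 + 3 * j + i) =
      (match sub? t p with
      | some (app _ _) =>
          if i = 0 then topIdx t (p ++ [false])
          else if i = 1 then topIdx t (p ++ [true])
          else dnIdx t p
      | some (lam x _) =>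
          if i = 0 then topIdx t (p ++ [false])
          else if i = 1 then
            match occOf t p x with
            | some q => dnIdx t q
            | none => 1 + 3 * j + i
          else dnIdx t p
      | _ => 1 + 3 * j + i) := by
  have h1 : ¬ (1 + 3 * j + i = 0) := by omega
  have h2 : (1 + 3 * j + i - 1) / 3 = j := by omega
  have h3 : (1 + 3 * j + i - 1) % 3 = i := by omega
  simp only [eIdx, if_neg h1, h2, h3, hget]

theorem eIdx_dn {t u : Term} {q : List Bool} {d : Bool} (h : sub? t (q ++ [d]) = some u) :
    eIdx t (dnIdx t (q ++ [d])) = topIdx t (q ++ [d]) := by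
  obtain ⟨hqmem, hshape⟩ := parent_node h
  rcases hshape with ⟨a, b, hq⟩ | ⟨z, b, hq, rfl, rfl⟩
  · cases d with
    | false =>
      rw [dnIdx_concat_app_f hq, ← Nat.add_zero (1 + 3 * (nodes t).idxOf q),
        eIdx_at (nidx_get hqmem) (by omega), hq]
      simp
    | true =>
      rw [dnIdx_concat_app_t hq, eIdx_at (nidx_get hqmem) (by omega), hq]
      simp
  · rw [dnIdx_concat_lam hq, ← Nat.add_zero (1 + 3 * (nodes t).idxOf q),
      eIdx_at (nidx_get hqmem) (by omega), hq]
    simp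

theorem eIdx_top_app {t a b : Term} {p : List Bool} (hp : sub? t p = some (app a b)) :
    eIdx t (topIdx t p) = dnIdx t p := by
  have hmem : p ∈ nodes t := mem_nodes.mpr (Or.inl ⟨a, b, hp⟩)
  rw [topIdx_app hp, eIdx_at (nidx_get hmem) (by omega), hp]
  simp

theorem eIdx_top_lam {t b : Term} {z : ℕ} {p : List Bool} (hp : sub? t p = some (lam z b)) :
    eIdx t (topIdx t p) = dnIdx t p := by
  have hmem : p ∈ nodes t := mem_nodes.mpr (Or.inr ⟨z, b, hp⟩)
  rw [topIdx_lam hp, eIdx_at (nidx_get hmem) (by omega), hp]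
  simp

theorem eIdx_top_var {Γ : List ℕ} {t : Term} {p s : List Bool} {y : ℕ} (h : Linear Γ t)
    (hp : sub? t p = some (var y)) (hb : binderPos t p = some s) :
    eIdx t (topIdx t p) = dnIdx t p := by
  obtain ⟨b, r, hs, -, -⟩ := binder_decomp hp hb
  have hmem : s ∈ nodes t := mem_nodes.mpr (Or.inr ⟨y, b, hs⟩)
  rw [topIdx_var hp hb, eIdx_at (nidx_get hmem) (by omega), hs]
  simp [occOf_eq h hs hp hb]

end Term
namespace Term

theorem dnIdx_pos {t u : Term} {q : List Bool} {d : Bool}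
    (h : sub? t (q ++ [d]) = some u) : 1 ≤ dnIdx t (q ++ [d]) := by
  obtain ⟨hqmem, hshape⟩ := parent_node h
  rcases hshape with ⟨a, b, hq⟩ | ⟨z, b, hq, rfl, rfl⟩
  · rw [dnIdx_concat_app hq]; omega
  · rw [dnIdx_concat_lam hq]; omega

theorem dnIdx_inj {t u₁ u₂ : Term} {p₁ p₂ : List Bool} (h₁ : sub? t p₁ = some u₁)
    (h₂ : sub? t p₂ = some u₂) (he : dnIdx t p₁ = dnIdx t p₂) : p₁ = p₂ := by
  rcases eq_nil_or_append p₁ with rfl | ⟨q₁, d₁, rfl⟩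
  · rcases eq_nil_or_append p₂ with rfl | ⟨q₂, d₂, rfl⟩
    · rfl
    · exfalso; have := dnIdx_pos h₂; rw [dnIdx_nil] at he; omega
  · rcases eq_nil_or_append p₂ with rfl | ⟨q₂, d₂, rfl⟩
    · exfalso; have := dnIdx_pos h₁; rw [dnIdx_nil] at he; omega
    · obtain ⟨hm₁, hs₁⟩ := parent_node h₁
      obtain ⟨hm₂, hs₂⟩ := parent_node h₂
      rcases hs₁ with ⟨a₁, b₁, hq₁⟩ | ⟨z₁, b₁, hq₁, rfl, rfl⟩ <;>
        rcases hs₂ with ⟨a₂, b₂, hq₂⟩ | ⟨z₂, b₂, hq₂, rfl, rfl⟩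
      · rw [dnIdx_concat_app hq₁, dnIdx_concat_app hq₂] at he
        have hq12 : (nodes t).idxOf q₁ = (nodes t).idxOf q₂ := by
          cases d₁ <;> cases d₂ <;> simp at he <;> omega
        cases nidx_inj hm₁ hm₂ hq12
        have : d₁ = d₂ := by
          cases d₁ <;> cases d₂ <;> simp at he <;> first | rfl | omega
        rw [this]
      · rw [dnIdx_concat_app hq₁, dnIdx_concat_lam hq₂] at he
        exfalso
        cases d₁ <;> simp at he
        · cases nidx_inj hm₁ hm₂ (by omega)
          rw [hq₁] at hq₂; cases hq₂
        · omega
      · rw [dnIdx_concat_lam hq₁, dnIdx_concat_app hq₂] at he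
        exfalso
        cases d₂ <;> simp at he
        · cases nidx_inj hm₁ hm₂ (by omega)
          rw [hq₁] at hq₂; cases hq₂
        · omega
      · rw [dnIdx_concat_lam hq₁, dnIdx_concat_lam hq₂] at he
        cases nidx_inj hm₁ hm₂ (by omega)
        rfl

theorem dn_ne_top {t u₁ u₂ : Term} {p₁ p₂ : List Bool} (hL : Linear [] t)
    (h₁ : sub? t p₁ = some u₁) (h₂ : sub? t p₂ = some u₂) :
    dnIdx t p₁ ≠ topIdx t p₂ := by
  intro he
  have hport2 : ∀ k, dnIdx t p₁ = 1 + 3 * k + 2 → False := by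
    intro k hk
    rcases eq_nil_or_append p₁ with rfl | ⟨q₁, d₁, rfl⟩
    · rw [dnIdx_nil] at hk; omega
    · obtain ⟨hm₁, hs₁⟩ := parent_node h₁
      rcases hs₁ with ⟨a₁, b₁, hq₁⟩ | ⟨z₁, b₁, hq₁, rfl, rfl⟩
      · rw [dnIdx_concat_app hq₁] at hk; cases d₁ <;> simp at hk <;> omega
      · rw [dnIdx_concat_lam hq₁] at hk; omega
  cases u₂ with
  | app a b => rw [topIdx_app h₂] at he; exact hport2 _ he
  | lam z b => rw [topIdx_lam h₂] at he; exact hport2 _ he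
  | var y =>
    obtain ⟨s, hb⟩ := binder_total hL h₂
    obtain ⟨b, r, hs, -, -⟩ := binder_decomp h₂ hb
    have hsmem : s ∈ nodes t := mem_nodes.mpr (Or.inr ⟨y, b, hs⟩)
    rw [topIdx_var h₂ hb] at he
    rcases eq_nil_or_append p₁ with rfl | ⟨q₁, d₁, rfl⟩
    · rw [dnIdx_nil] at he; omega
    · obtain ⟨hm₁, hs₁⟩ := parent_node h₁
      rcases hs₁ with ⟨a₁, b₁, hq₁⟩ | ⟨z₁, b₁, hq₁, rfl, rfl⟩
      · rw [dnIdx_concat_app hq₁] at he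
        cases d₁ <;> simp at he
        · omega
        · cases nidx_inj hm₁ hsmem (by omega)
          rw [hq₁] at hs; cases hs
      · rw [dnIdx_concat_lam hq₁] at he; omega

theorem topIdx_inj {Γ : List ℕ} {t u₁ u₂ : Term} {p₁ p₂ : List Bool} (hL : Linear Γ t)
    (hcl : Linear [] t)
    (h₁ : sub? t p₁ = some u₁) (h₂ : sub? t p₂ = some u₂)
    (he : topIdx t p₁ = topIdx t p₂) : p₁ = p₂ := by
  have hnode : ∀ (p q : List Bool), p ∈ nodes t → q ∈ nodes t →
      1 + 3 * (nodes t).idxOf p + 2 = 1 + 3 * (nodes t).idxOf q + 2 → p = q := by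
    intro p q hp hq h
    exact nidx_inj hp hq (by omega)
  cases u₁ with
  | var y₁ =>
    obtain ⟨s₁, hb₁⟩ := binder_total hcl h₁
    obtain ⟨b₁, r₁, hs₁, hp₁, hf₁⟩ := binder_decomp h₁ hb₁
    have hm₁ : s₁ ∈ nodes t := mem_nodes.mpr (Or.inr ⟨y₁, b₁, hs₁⟩)
    rw [topIdx_var h₁ hb₁] at he
    cases u₂ with
    | var y₂ =>
      obtain ⟨s₂, hb₂⟩ := binder_total hcl h₂
      obtain ⟨b₂, r₂, hs₂, hp₂, hf₂⟩ := binder_decomp h₂ hb₂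
      have hm₂ : s₂ ∈ nodes t := mem_nodes.mpr (Or.inr ⟨y₂, b₂, hs₂⟩)
      rw [topIdx_var h₂ hb₂] at he
      cases nidx_inj hm₁ hm₂ (by omega)
      rw [hs₁] at hs₂
      injection hs₂ with hs₂'
      injection hs₂' with hy hbb
      subst hy; subst hbb
      obtain ⟨Δ, hΔ⟩ := linear_sub hL (s₁ ++ [false]) b₁
        (by rw [sub?_append, hs₁]; simp [sub?, sub?_nil])
      rw [hp₁, hp₂, freeOcc_unique hΔ y₁ r₁ r₂ hf₁ hf₂]
    | app a₂ b₂ => rw [topIdx_app h₂] at he; omega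
    | lam z₂ b₂ => rw [topIdx_lam h₂] at he; omega
  | app a₁ b₁ =>
    have hm₁ : p₁ ∈ nodes t := mem_nodes.mpr (Or.inl ⟨a₁, b₁, h₁⟩)
    rw [topIdx_app h₁] at he
    cases u₂ with
    | var y₂ =>
      obtain ⟨s₂, hb₂⟩ := binder_total hcl h₂
      rw [topIdx_var h₂ hb₂] at he; omega
    | app a₂ b₂ =>
      exact hnode _ _ hm₁ (mem_nodes.mpr (Or.inl ⟨a₂, b₂, h₂⟩)) (by rw [topIdx_app h₂] at he; omega)
    | lam z₂ b₂ =>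
      exact hnode _ _ hm₁ (mem_nodes.mpr (Or.inr ⟨z₂, b₂, h₂⟩)) (by rw [topIdx_lam h₂] at he; omega)
  | lam z₁ b₁ =>
    have hm₁ : p₁ ∈ nodes t := mem_nodes.mpr (Or.inr ⟨z₁, b₁, h₁⟩)
    rw [topIdx_lam h₁] at he
    cases u₂ with
    | var y₂ =>
      obtain ⟨s₂, hb₂⟩ := binder_total hcl h₂
      rw [topIdx_var h₂ hb₂] at he; omega
    | app a₂ b₂ =>
      exact hnode _ _ hm₁ (mem_nodes.mpr (Or.inl ⟨a₂, b₂, h₂⟩)) (by rw [topIdx_app h₂] at he; omega)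
    | lam z₂ b₂ =>
      exact hnode _ _ hm₁ (mem_nodes.mpr (Or.inr ⟨z₂, b₂, h₂⟩)) (by rw [topIdx_lam h₂] at he; omega)

theorem dart_classify {t : Term} (hL : Linear [] t) {a : ℕ}
    (ha : a < 3 * (nodes t).length + 1) :
    ∃ p u, sub? t p = some u ∧ (a = dnIdx t p ∨ a = topIdx t p) := by
  rcases Nat.eq_zero_or_pos a with rfl | hpos
  · exact ⟨[], t, sub?_nil t, Or.inl (dnIdx_nil t).symm⟩
  · have hj : (a - 1) / 3 < (nodes t).length := by omega
    set j := (a - 1) / 3 with hjdef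
    set p := (nodes t)[j] with hpdef
    have hmem : p ∈ nodes t := List.getElem_mem hj
    have hidx : (nodes t).idxOf p = j := by
      have h2 := List.getElem_idxOf (List.idxOf_lt_length_iff.mpr hmem)
      have h3 := (List.Nodup.getElem_inj_iff (nodes_nodup t)).mp h2
      exact h3
    have hcode : a = 1 + 3 * j + (a - 1) % 3 := by omega
    have hi3 : (a - 1) % 3 < 3 := by omega
    rcases mem_nodes.mp hmem with ⟨aa, bb, hp⟩ | ⟨zz, bb, hp⟩
    · have hchildf : sub? t (p ++ [false]) = some aa := by
        rw [sub?_append, hp]; simp [sub?, sub?_nil]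
      have hchildt : sub? t (p ++ [true]) = some bb := by
        rw [sub?_append, hp]; simp [sub?, sub?_nil]
      rcases (by omega : (a - 1) % 3 = 0 ∨ (a - 1) % 3 = 1 ∨ (a - 1) % 3 = 2) with h0 | h1 | h2
      · exact ⟨p ++ [false], aa, hchildf, Or.inl (by rw [dnIdx_concat_app_f hp, hidx]; omega)⟩
      · exact ⟨p ++ [true], bb, hchildt, Or.inl (by rw [dnIdx_concat_app_t hp, hidx]; omega)⟩
      · exact ⟨p, app aa bb, hp, Or.inr (by rw [topIdx_app hp, hidx]; omega)⟩
    · have hchildf : sub? t (p ++ [false]) = some bb := by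
        rw [sub?_append, hp]; simp [sub?, sub?_nil]
      rcases (by omega : (a - 1) % 3 = 0 ∨ (a - 1) % 3 = 1 ∨ (a - 1) % 3 = 2) with h0 | h1 | h2
      · exact ⟨p ++ [false], bb, hchildf, Or.inl (by rw [dnIdx_concat_lam hp, hidx]; omega)⟩
      · obtain ⟨q, hq1, hq2, -⟩ := occ_exists hL hp
        exact ⟨q, var zz, hq1, Or.inr (by rw [topIdx_var hq1 hq2, hidx]; omega)⟩
      · exact ⟨p, lam zz bb, hp, Or.inr (by rw [topIdx_lam hp, hidx]; omega)⟩

end Term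
/-! ## Map-level lemmas -/

open Term

theorem e_val {T : Term} (a : (underlying [] T).carrier) :
    ((underlying [] T).e a).val = Term.eIdx T a.val % (3 * (Term.nodes T).length + 1) := rfl

theorem root_val {T : Term} : ((underlying [] T).root).val = 0 := rfl

theorem e_eq {T : Term} (a : (underlying [] T).carrier) {b : ℕ}
    (hb : b < 3 * (Term.nodes T).length + 1)
    (h : Term.eIdx T a.val = b) : (underlying [] T).e a = ⟨b, hb⟩ := by
  apply Fin.ext
  rw [e_val, h]
  exact Nat.mod_eq_of_lt hb

theorem v_val_code {T : Term} {j i : ℕ} (hj : j < (Term.nodes T).length) (hi : i < 3)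
    (h : 1 + 3 * j + i < 3 * (Term.nodes T).length + 1)
    (h' : 1 + 3 * j + (i + 2) % 3 < 3 * (Term.nodes T).length + 1) :
    (underlying [] T).v ⟨1 + 3 * j + i, h⟩ = ⟨1 + 3 * j + (i + 2) % 3, h'⟩ := by
  apply Fin.ext
  show (if (1 + 3 * j + i) = 0 then (⟨1 + 3 * j + i, h⟩ : Fin _)
    else ⟨(1 + 3 * ((1 + 3 * j + i - 1) / 3) + ((1 + 3 * j + i - 1) % 3 + 2) % 3) %
            (3 * (Term.nodes T).length + 1), Nat.mod_lt _ (by omega)⟩).val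
    = 1 + 3 * j + (i + 2) % 3
  rw [if_neg (by omega)]
  show (1 + 3 * ((1 + 3 * j + i - 1) / 3) + ((1 + 3 * j + i - 1) % 3 + 2) % 3) %
            (3 * (Term.nodes T).length + 1) = 1 + 3 * j + (i + 2) % 3
  have hA : 1 + 3 * ((1 + 3 * j + i - 1) / 3) + ((1 + 3 * j + i - 1) % 3 + 2) % 3
      = 1 + 3 * j + (i + 2) % 3 := by omega
  rw [hA]
  exact Nat.mod_eq_of_lt h'

theorem ec_symm {M : PreMap} {x a b : M.carrier} (h : EdgeConn M x a b) : EdgeConn M x b a :=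
  Relation.EqvGen.symm _ _ h

theorem ec_trans {M : PreMap} {x a b c : M.carrier} (h1 : EdgeConn M x a b)
    (h2 : EdgeConn M x b c) : EdgeConn M x a c :=
  Relation.EqvGen.trans _ _ _ h1 h2

theorem ec_refl {M : PreMap} {x : M.carrier} (a : M.carrier) : EdgeConn M x a a :=
  Relation.EqvGen.refl _

theorem ec_v {M : PreMap} {x : M.carrier} (a : M.carrier) : EdgeConn M x a (M.v a) :=
  Relation.EqvGen.rel _ _ (Or.inl rfl)

theorem ec_e {M : PreMap} {x a : M.carrier} (h1 : a ≠ x) (h2 : a ≠ M.e x) :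
    EdgeConn M x a (M.e a) :=
  Relation.EqvGen.rel _ _ (Or.inr ⟨rfl, h1, h2⟩)

/-- within one trivalent vertex, all three ports are connected by `v`-steps -/
theorem ec_port {T : Term} {x₀ : (underlying [] T).carrier} {j i i' : ℕ}
    (hj : j < (Term.nodes T).length) (hi : i < 3) (hi' : i' < 3)
    (h : 1 + 3 * j + i < 3 * (Term.nodes T).length + 1)
    (h' : 1 + 3 * j + i' < 3 * (Term.nodes T).length + 1) :
    EdgeConn (underlying [] T) x₀ ⟨1 + 3 * j + i, h⟩ ⟨1 + 3 * j + i', h'⟩ := by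
  have step : ∀ (i : ℕ) (hi : i < 3) (hb : 1 + 3 * j + i < 3 * (Term.nodes T).length + 1)
      (hb' : 1 + 3 * j + (i + 2) % 3 < 3 * (Term.nodes T).length + 1),
      EdgeConn (underlying [] T) x₀ ⟨1 + 3 * j + i, hb⟩ ⟨1 + 3 * j + (i + 2) % 3, hb'⟩ := by
    intro i hi hb hb'
    have := ec_v (M := underlying [] T) (x := x₀) ⟨1 + 3 * j + i, hb⟩
    rwa [v_val_code hj hi hb hb'] at this
  have hb0 : 1 + 3 * j + 0 < 3 * (Term.nodes T).length + 1 := by omega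
  have hb1 : 1 + 3 * j + 1 < 3 * (Term.nodes T).length + 1 := by omega
  have hb2 : 1 + 3 * j + 2 < 3 * (Term.nodes T).length + 1 := by omega
  have s0 : EdgeConn (underlying [] T) x₀ ⟨1 + 3 * j + 0, hb0⟩ ⟨1 + 3 * j + 2, hb2⟩ := by
    have := step 0 (by omega) hb0 (by simpa using hb2)
    simpa using this
  have s2 : EdgeConn (underlying [] T) x₀ ⟨1 + 3 * j + 2, hb2⟩ ⟨1 + 3 * j + 1, hb1⟩ := by
    have := step 2 (by omega) hb2 (by simpa using hb1)
    simpa using this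
  have s1 : EdgeConn (underlying [] T) x₀ ⟨1 + 3 * j + 1, hb1⟩ ⟨1 + 3 * j + 0, hb0⟩ := by
    have := step 1 (by omega) hb1 (by simpa using hb0)
    simpa using this
  have any0 : ∀ (i : ℕ) (hi : i < 3) (hb : 1 + 3 * j + i < 3 * (Term.nodes T).length + 1),
      EdgeConn (underlying [] T) x₀ ⟨1 + 3 * j + i, hb⟩ ⟨1 + 3 * j + 0, hb0⟩ := by
    intro i hi hb
    rcases (by omega : i = 0 ∨ i = 1 ∨ i = 2) with rfl | rfl | rfl
    · exact ec_refl _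
    · exact s1
    · exact ec_trans s2 s1
  exact ec_trans (any0 i hi h) (ec_symm (any0 i' hi' h'))

theorem prefix_dropLast {P q : List Bool} {d : Bool} (h : P <+: q ++ [d])
    (hne : P ≠ q ++ [d]) : P <+: q := by
  obtain ⟨s, hs⟩ := h
  rcases Term.eq_nil_or_append s with rfl | ⟨s', c, rfl⟩
  · simp at hs; exact absurd hs hne
  · rw [← List.append_assoc] at hs
    have h2 := congrArg List.dropLast hs
    rw [List.dropLast_concat, List.dropLast_concat] at h2
    exact ⟨s', h2⟩

theorem prefix_length_lt {P s : List Bool} (h : s <+: P) (hne : s ≠ P) :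
    s.length < P.length := by
  rcases lt_or_eq_of_le h.length_le with h' | h'
  · exact h'
  · exact absurd (List.IsPrefix.eq_of_length h h') hne

theorem conn_all {T uP : Term} {P : List Bool} (hcl : Linear [] T)
    (hP : Term.sub? T P = some uP) (hPne : P ≠ [])
    (hesc : P ∈ Term.nodes T → ∃ y r s bs, r ≠ [] ∧ Term.sub? T (P ++ r) = some (Term.var y) ∧
        Term.binderPos T (P ++ r) = some s ∧ Term.sub? T s = some (Term.lam y bs) ∧
        s <+: P ∧ s ≠ P)
    (x₀ : (underlying [] T).carrier)
    (hx1 : x₀.val = Term.dnIdx T P ∨ x₀.val = Term.topIdx T P)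
    (hx2 : ((underlying [] T).e x₀).val = Term.dnIdx T P ∨
           ((underlying [] T).e x₀).val = Term.topIdx T P) :
    ∀ a b, EdgeConn (underlying [] T) x₀ a b := by
  have wire : ∀ (p : List Bool) (u : Term) (hp : Term.sub? T p = some u), p ≠ P →
      EdgeConn (underlying [] T) x₀ ⟨Term.dnIdx T p, dnIdx_lt hp⟩
        ⟨Term.topIdx T p, topIdx_lt hcl hp⟩ := by
    intro p u hp hne
    have hd1 : Term.dnIdx T p ≠ Term.dnIdx T P := fun h => hne (dnIdx_inj hp hP h)
    have hd2 : Term.dnIdx T p ≠ Term.topIdx T P := dn_ne_top hcl hp hP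
    have ha1 : (⟨Term.dnIdx T p, dnIdx_lt hp⟩ : (underlying [] T).carrier) ≠ x₀ := by
      intro h
      rcases hx1 with h1 | h1
      · exact hd1 ((congrArg Fin.val h).trans h1)
      · exact hd2 ((congrArg Fin.val h).trans h1)
    have ha2 : (⟨Term.dnIdx T p, dnIdx_lt hp⟩ : (underlying [] T).carrier)
        ≠ (underlying [] T).e x₀ := by
      intro h
      rcases hx2 with h1 | h1
      · exact hd1 ((congrArg Fin.val h).trans h1)
      · exact hd2 ((congrArg Fin.val h).trans h1)
    have he : (underlying [] T).e ⟨Term.dnIdx T p, dnIdx_lt hp⟩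
        = ⟨Term.topIdx T p, topIdx_lt hcl hp⟩ := by
      apply e_eq
      rcases Term.eq_nil_or_append p with rfl | ⟨q, d, rfl⟩
      · show Term.eIdx T (Term.dnIdx T []) = Term.topIdx T []
        rw [Term.dnIdx_nil]
        exact Term.eIdx_zero T
      · exact Term.eIdx_dn hp
    exact he ▸ ec_e ha1 ha2
  have key : ∀ m (p : List Bool) (hpn : p ∈ Term.nodes T), p.length ≤ m →
      EdgeConn (underlying [] T) x₀
        ⟨1 + 3 * (Term.nodes T).idxOf p + 2, by have := Term.nidx_lt hpn; omega⟩
        (underlying [] T).root := by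
    intro m
    induction m using Nat.strong_induction_on with
    | _ m ih =>
      intro p hpn hlen
      by_cases hpP : p = P
      · -- the removed wire: use the escape route via a free variable
        subst hpP
        obtain ⟨y, r, s, bs, hrne, hocc, hbind, hs, hsP, hsneP⟩ := hesc hpn
        have hsmem : s ∈ Term.nodes T := Term.mem_nodes.mpr (Or.inr ⟨y, bs, hs⟩)
        obtain ⟨r', c, rfl⟩ : ∃ r' c, r = r' ++ [c] := by
          rcases Term.eq_nil_or_append r with rfl | h
          · exact absurd rfl hrne
          · exact h
        have hocc' : Term.sub? T ((p ++ r') ++ [c]) = some (Term.var y) := by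
          rw [List.append_assoc]; exact hocc
        obtain ⟨hq'n, hshape'⟩ := Term.parent_node hocc'
        -- the down-chain from `p ++ r'` to `p`
        have hdown : ∀ k (p' : List Bool) (hp'n : p' ∈ Term.nodes T), p <+: p' →
            p'.length ≤ k →
            EdgeConn (underlying [] T) x₀
              ⟨1 + 3 * (Term.nodes T).idxOf p' + 2, by have := Term.nidx_lt hp'n; omega⟩
              ⟨1 + 3 * (Term.nodes T).idxOf p + 2, by have := Term.nidx_lt hpn; omega⟩ := by
          intro k
          induction k using Nat.strong_induction_on with
          | _ k ihk =>
            intro p' hp'n hpre hlen'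
            by_cases hp'p : p' = p
            · subst hp'p; exact ec_refl _
            · obtain ⟨u', hp'u⟩ : ∃ u', Term.sub? T p' = some u' := by
                rcases Term.mem_nodes.mp hp'n with ⟨a, b, h⟩ | ⟨z, b, h⟩
                exacts [⟨_, h⟩, ⟨_, h⟩]
              have htop' : Term.topIdx T p' = 1 + 3 * (Term.nodes T).idxOf p' + 2 := by
                rcases Term.mem_nodes.mp hp'n with ⟨a, b, h⟩ | ⟨z, b, h⟩
                · exact Term.topIdx_app h
                · exact Term.topIdx_lam h
              rcases Term.eq_nil_or_append p' with rfl | ⟨q', d', rfl⟩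
              · exact absurd (List.prefix_nil.mp hpre) hPne
              · obtain ⟨hq'mem, hshape''⟩ := Term.parent_node hp'u
                have hpreq : p <+: q' := prefix_dropLast hpre (fun h => hp'p h.symm)
                obtain ⟨c', hc'3, hdn'⟩ : ∃ c', c' < 3 ∧
                    Term.dnIdx T (q' ++ [d']) = 1 + 3 * (Term.nodes T).idxOf q' + c' := by
                  rcases hshape'' with ⟨a, b, hq⟩ | ⟨z, b, hq, rfl, rfl⟩
                  · rcases d' with _ | _
                    · exact ⟨0, by omega, by rw [Term.dnIdx_concat_app_f hq]; rfl⟩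
                    · exact ⟨1, by omega, Term.dnIdx_concat_app_t hq⟩
                  · exact ⟨0, by omega, by rw [Term.dnIdx_concat_lam hq]; rfl⟩
                have hw := wire _ _ hp'u hp'p
                have e1 : (⟨Term.dnIdx T (q' ++ [d']), dnIdx_lt hp'u⟩ : (underlying [] T).carrier)
                    = ⟨1 + 3 * (Term.nodes T).idxOf q' + c',
                        by have := Term.nidx_lt hq'mem; omega⟩ := Fin.ext hdn'
                have e2 : (⟨Term.topIdx T (q' ++ [d']), topIdx_lt hcl hp'u⟩ :
                    (underlying [] T).carrier)
                    = ⟨1 + 3 * (Term.nodes T).idxOf (q' ++ [d']) + 2,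
                        by have := Term.nidx_lt hp'n; omega⟩ := Fin.ext htop'
                rw [e1, e2] at hw
                have hport := ec_port (T := T) (x₀ := x₀) (Term.nidx_lt hq'mem) hc'3
                  (by omega : (2:ℕ) < 3) (by have := Term.nidx_lt hq'mem; omega)
                  (by have := Term.nidx_lt hq'mem; omega)
                have hrec := ihk q'.length
                  (by simp only [List.length_append, List.length_singleton] at hlen'; omega)
                  q' hq'mem hpreq le_rfl
                exact ec_trans (ec_symm hw) (ec_trans hport hrec)
        -- assemble the escape route
        have hq0ne : (p ++ r') ++ [c] ≠ p := by
          intro h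
          have := congrArg List.length h
          simp at this
        have hw0 := wire _ _ hocc' hq0ne
        have htop0 : Term.topIdx T ((p ++ r') ++ [c]) = 1 + 3 * (Term.nodes T).idxOf s + 1 := by
          rw [List.append_assoc]
          exact Term.topIdx_var hocc hbind
        obtain ⟨c', hc'3, hdn0⟩ : ∃ c', c' < 3 ∧
            Term.dnIdx T ((p ++ r') ++ [c]) = 1 + 3 * (Term.nodes T).idxOf (p ++ r') + c' := by
          rcases hshape' with ⟨a, b, hq⟩ | ⟨z, b, hq, rfl, rfl⟩
          · rcases c with _ | _
            · exact ⟨0, by omega, by rw [Term.dnIdx_concat_app_f hq]; rfl⟩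
            · exact ⟨1, by omega, Term.dnIdx_concat_app_t hq⟩
          · exact ⟨0, by omega, by rw [Term.dnIdx_concat_lam hq]; rfl⟩
        have e1 : (⟨Term.dnIdx T ((p ++ r') ++ [c]), dnIdx_lt hocc'⟩ : (underlying [] T).carrier)
            = ⟨1 + 3 * (Term.nodes T).idxOf (p ++ r') + c',
                by have := Term.nidx_lt hq'n; omega⟩ := Fin.ext hdn0
        have e2 : (⟨Term.topIdx T ((p ++ r') ++ [c]), topIdx_lt hcl hocc'⟩ :
            (underlying [] T).carrier)
            = ⟨1 + 3 * (Term.nodes T).idxOf s + 1,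
                by have := Term.nidx_lt hsmem; omega⟩ := Fin.ext htop0
        rw [e1, e2] at hw0
        have hdownInst := hdown (p ++ r').length (p ++ r') hq'n ⟨r', rfl⟩ le_rfl
        have hport1 := ec_port (T := T) (x₀ := x₀) (Term.nidx_lt hq'n)
          (by omega : (2:ℕ) < 3) hc'3
          (by have := Term.nidx_lt hq'n; omega) (by have := Term.nidx_lt hq'n; omega)
        have hport2 := ec_port (T := T) (x₀ := x₀) (Term.nidx_lt hsmem)
          (by omega : (1:ℕ) < 3) (by omega : (2:ℕ) < 3)
          (by have := Term.nidx_lt hsmem; omega) (by have := Term.nidx_lt hsmem; omega)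
        have hrecs := ih s.length
          (by have h1 := prefix_length_lt hsP hsneP; omega)
          s hsmem le_rfl
        exact ec_trans (ec_symm hdownInst)
          (ec_trans hport1 (ec_trans hw0 (ec_trans hport2 hrecs)))
      · -- ordinary wire towards the root
        obtain ⟨u, hpu⟩ : ∃ u, Term.sub? T p = some u := by
          rcases Term.mem_nodes.mp hpn with ⟨a, b, h⟩ | ⟨z, b, h⟩
          exacts [⟨_, h⟩, ⟨_, h⟩]
        have htop : Term.topIdx T p = 1 + 3 * (Term.nodes T).idxOf p + 2 := by
          rcases Term.mem_nodes.mp hpn with ⟨a, b, h⟩ | ⟨z, b, h⟩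
          · exact Term.topIdx_app h
          · exact Term.topIdx_lam h
        have hw := wire p u hpu hpP
        have e2 : (⟨Term.topIdx T p, topIdx_lt hcl hpu⟩ : (underlying [] T).carrier)
            = ⟨1 + 3 * (Term.nodes T).idxOf p + 2,
                by have := Term.nidx_lt hpn; omega⟩ := Fin.ext htop
        rw [e2] at hw
        rcases Term.eq_nil_or_append p with rfl | ⟨q, d, rfl⟩
        · exact ec_symm hw
        · obtain ⟨hqmem, hshape⟩ := Term.parent_node hpu
          obtain ⟨c', hc'3, hdn⟩ : ∃ c', c' < 3 ∧
              Term.dnIdx T (q ++ [d]) = 1 + 3 * (Term.nodes T).idxOf q + c' := by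
            rcases hshape with ⟨a, b, hq⟩ | ⟨z, b, hq, rfl, rfl⟩
            · rcases d with _ | _
              · exact ⟨0, by omega, by rw [Term.dnIdx_concat_app_f hq]; rfl⟩
              · exact ⟨1, by omega, Term.dnIdx_concat_app_t hq⟩
            · exact ⟨0, by omega, by rw [Term.dnIdx_concat_lam hq]; rfl⟩
          have e1 : (⟨Term.dnIdx T (q ++ [d]), dnIdx_lt hpu⟩ : (underlying [] T).carrier)
              = ⟨1 + 3 * (Term.nodes T).idxOf q + c',
                  by have := Term.nidx_lt hqmem; omega⟩ := Fin.ext hdn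
          rw [e1] at hw
          have hport := ec_port (T := T) (x₀ := x₀) (Term.nidx_lt hqmem) hc'3
            (by omega : (2:ℕ) < 3)
            (by have := Term.nidx_lt hqmem; omega) (by have := Term.nidx_lt hqmem; omega)
          have hrec := ih q.length
            (by simp only [List.length_append, List.length_singleton] at hlen; omega)
            q hqmem le_rfl
          exact ec_trans (ec_symm hw) (ec_trans hport hrec)
  -- every dart is connected to the root
  have all : ∀ a : (underlying [] T).carrier, EdgeConn (underlying [] T) x₀ a
      (underlying [] T).root := by
    intro a
    rcases Nat.eq_zero_or_pos a.val with h0 | hpos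
    · have : a = (underlying [] T).root := Fin.ext h0
      rw [this]; exact ec_refl _
    · have hlt := a.isLt
      have hj : (a.val - 1) / 3 < (Term.nodes T).length := by omega
      set j := (a.val - 1) / 3 with hjdef
      set p := (Term.nodes T)[j] with hpdef
      have hmem : p ∈ Term.nodes T := List.getElem_mem hj
      have hidx : (Term.nodes T).idxOf p = j := by
        have h2 := List.getElem_idxOf (List.idxOf_lt_length_iff.mpr hmem)
        have h3 := (List.Nodup.getElem_inj_iff (Term.nodes_nodup T)).mp h2
        exact h3
      have hcode : a.val = 1 + 3 * j + (a.val - 1) % 3 := by omega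
      have hi3 : (a.val - 1) % 3 < 3 := by omega
      have ha : a = ⟨1 + 3 * j + (a.val - 1) % 3, by omega⟩ := Fin.ext hcode
      have hport := ec_port (T := T) (x₀ := x₀) (j := j) hj hi3
        (by omega : (2:ℕ) < 3) (by omega) (by omega)
      have hkey := key p.length p hmem le_rfl
      have e3 : (⟨1 + 3 * (Term.nodes T).idxOf p + 2,
          by have := Term.nidx_lt hmem; omega⟩ : (underlying [] T).carrier)
          = ⟨1 + 3 * j + 2, by omega⟩ :=
        Fin.ext (by show 1 + 3 * (Term.nodes T).idxOf p + 2 = 1 + 3 * j + 2; omega)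
      rw [e3] at hkey
      rw [ha]
      exact ec_trans hport hkey
  intro a b
  exact ec_trans (all a) (ec_symm (all b))

/-! ## The separation invariant -/

/-- the set of dart values lying strictly inside the subterm at `P` -/
def Sv (T : Term) (P : List Bool) (v : ℕ) : Prop :=
  ∃ j i pn, i < 3 ∧ v = 1 + 3 * j + i ∧ (Term.nodes T)[j]? = some pn ∧ P <+: pn

theorem Sv_code {T : Term} {P : List Bool} {v' j i : ℕ} (hi : i < 3) (hv : v' = 1 + 3 * j + i) :
    Sv T P v' ↔ ∃ pn, (Term.nodes T)[j]? = some pn ∧ P <+: pn := by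
  constructor
  · rintro ⟨j', i', pn, hi', hv', hg, hpre⟩
    have : j' = j := by omega
    subst this
    exact ⟨pn, hg, hpre⟩
  · rintro ⟨pn, hg, hpre⟩
    exact ⟨j, i, pn, hi, hv, hg, hpre⟩

theorem Sv_port {T : Term} {P q : List Bool} {i : ℕ} (hq : q ∈ Term.nodes T) (hi : i < 3) :
    Sv T P (1 + 3 * (Term.nodes T).idxOf q + i) ↔ P <+: q := by
  rw [Sv_code hi rfl]
  constructor
  · rintro ⟨pn, hg, hpre⟩
    rw [Term.nidx_get hq] at hg
    cases hg
    exact hpre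
  · intro h
    exact ⟨q, Term.nidx_get hq, h⟩

theorem Sv_zero {T : Term} {P : List Bool} : ¬ Sv T P 0 := by
  rintro ⟨j, i, pn, hi, hv, -, -⟩
  omega

theorem root_node {T : Term} (hcl : Linear [] T) :
    (∃ a b, T = Term.app a b) ∨ (∃ z b, T = Term.lam z b) := by
  cases T with
  | var y =>
    have h2 := (Term.linear_nodup_perm hcl).2
    rw [List.perm_nil] at h2
    simp [Term.freeList] at h2
  | app a b => exact Or.inl ⟨a, b, rfl⟩
  | lam z b => exact Or.inr ⟨z, b, rfl⟩

/-- removing the wire of a closed subterm: both endpoints of any other wire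
are on the same side of the cut -/
theorem wire_inv {T uP : Term} {P p : List Bool} {u : Term} (hcl : Linear [] T)
    (hP : Term.sub? T P = some uP) (hclosed : uP.freeList = []) (hPne : P ≠ [])
    (hp : Term.sub? T p = some u) (hne : p ≠ P) :
    (Sv T P (Term.dnIdx T p) ↔ Sv T P (Term.topIdx T p)) := by
  rcases Term.eq_nil_or_append p with rfl | ⟨q, d', rfl⟩
  · rw [Term.dnIdx_nil]
    have hu : T = u := by rw [Term.sub?_nil] at hp; exact Option.some.inj hp
    subst hu
    have hnilmem : [] ∈ Term.nodes T := by
      rcases root_node hcl with ⟨a, b, h⟩ | ⟨z, b, h⟩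
      · exact Term.mem_nodes.mpr (Or.inl ⟨a, b, by rw [← h]; exact hp⟩)
      · exact Term.mem_nodes.mpr (Or.inr ⟨z, b, by rw [← h]; exact hp⟩)
    have htop : Term.topIdx T [] = 1 + 3 * (Term.nodes T).idxOf ([] : List Bool) + 2 := by
      rcases root_node hcl with ⟨a, b, h⟩ | ⟨z, b, h⟩
      · exact Term.topIdx_app (by rw [← h]; exact hp)
      · exact Term.topIdx_lam (by rw [← h]; exact hp)
    rw [htop]
    constructor
    · intro h; exact absurd h Sv_zero
    · intro h
      exfalso
      have := (Sv_port hnilmem (by omega : (2:ℕ) < 3)).mp h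
      exact hPne (List.prefix_nil.mp this)
  · obtain ⟨hqmem, hshape⟩ := Term.parent_node hp
    obtain ⟨c', hc'3, hdn⟩ : ∃ c', c' < 3 ∧
        Term.dnIdx T (q ++ [d']) = 1 + 3 * (Term.nodes T).idxOf q + c' := by
      rcases hshape with ⟨a, b, hq⟩ | ⟨z, b, hq, rfl, rfl⟩
      · rcases d' with _ | _
        · exact ⟨0, by omega, by rw [Term.dnIdx_concat_app_f hq]; rfl⟩
        · exact ⟨1, by omega, Term.dnIdx_concat_app_t hq⟩
      · exact ⟨0, by omega, by rw [Term.dnIdx_concat_lam hq]; rfl⟩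
    rw [hdn, Sv_port hqmem hc'3]
    cases u with
    | app a b =>
      have hpmem : q ++ [d'] ∈ Term.nodes T := Term.mem_nodes.mpr (Or.inl ⟨a, b, hp⟩)
      rw [Term.topIdx_app hp, Sv_port hpmem (by omega : (2:ℕ) < 3)]
      constructor
      · intro h; exact h.trans (List.prefix_append q [d'])
      · intro h; exact prefix_dropLast h (fun hh => hne hh.symm)
    | lam z b =>
      have hpmem : q ++ [d'] ∈ Term.nodes T := Term.mem_nodes.mpr (Or.inr ⟨z, b, hp⟩)
      rw [Term.topIdx_lam hp, Sv_port hpmem (by omega : (2:ℕ) < 3)]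
      constructor
      · intro h; exact h.trans (List.prefix_append q [d'])
      · intro h; exact prefix_dropLast h (fun hh => hne hh.symm)
    | var y =>
      obtain ⟨s, hb⟩ := Term.binder_total hcl hp
      obtain ⟨bs, rr, hs, hdecomp, -⟩ := Term.binder_decomp hp hb
      have hsmem : s ∈ Term.nodes T := Term.mem_nodes.mpr (Or.inr ⟨y, bs, hs⟩)
      rw [Term.topIdx_var hp hb, Sv_port hsmem (by omega : (1:ℕ) < 3)]
      by_cases hPp : P <+: q ++ [d']
      · -- the occurrence is inside the closed subterm, hence so is its binder
        have hl : P <+: q := prefix_dropLast hPp (fun hh => hne hh.symm)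
        obtain ⟨rest, hrest⟩ := hPp
        have hrestne : rest ≠ [] := by
          intro h; rw [h] at hrest; simp at hrest; exact hne hrest.symm
        have hsubrest : Term.sub? uP rest = some (Term.var y) := by
          have h2 := hp
          rw [← hrest, Term.sub?_append, hP] at h2
          simpa using h2
        have hsome : ∃ s₀, Term.prefF uP y rest = some s₀ := by
          cases hpf : Term.prefF uP y rest with
          | some s₀ => exact ⟨s₀, rfl⟩
          | none =>
            exfalso
            have : y ∈ Term.freeList uP := Term.mem_freeList_iff.mpr ⟨rest, hsubrest, hpf⟩
            rw [hclosed] at this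
            simp at this
        obtain ⟨s₀, hs₀⟩ := hsome
        have hbp : Term.binderPos T (q ++ [d']) = some (P ++ s₀) := by
          rw [Term.binderPos_eq_prefF hp, ← hrest, Term.prefF_append hP, hs₀]
          rfl
        rw [hb] at hbp
        cases hbp
        constructor
        · intro _; exact ⟨s₀, rfl⟩
        · intro _; exact hl
      · -- the occurrence is outside, hence so is its binder
        constructor
        · intro h
          exact absurd (h.trans (List.prefix_append q [d'])) hPp
        · intro h
          exfalso
          apply hPp
          exact h.trans ⟨false :: rr, hdecomp.symm⟩

theorem dartOf_val {T u : Term} {P : List Bool} (hP : Term.sub? T P = some u) :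
    (dartOf [] T P).val = Term.dnIdx T P := Nat.mod_eq_of_lt (Term.dnIdx_lt hP)

theorem e_dartOf {T u : Term} {P : List Bool} (hcl : Linear [] T)
    (hP : Term.sub? T P = some u) (hPne : P ≠ []) :
    (underlying [] T).e (dartOf [] T P) = ⟨Term.topIdx T P, Term.topIdx_lt hcl hP⟩ := by
  apply e_eq
  rw [dartOf_val hP]
  rcases Term.eq_nil_or_append P with rfl | ⟨q, d, rfl⟩
  · exact absurd rfl hPne
  · exact Term.eIdx_dn hP

theorem e_root_eq {T : Term} (hcl : Linear [] T) :
    (underlying [] T).e (underlying [] T).root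
      = ⟨Term.topIdx T [], Term.topIdx_lt hcl (Term.sub?_nil T)⟩ := by
  apply e_eq
  exact Term.eIdx_zero T

theorem bridge_of_closed {T uP t₁ t₂ : Term} {Q : List Bool} {d : Bool}
    (hcl : Linear [] T) (hQ : Term.sub? T Q = some (Term.app t₁ t₂))
    (hP : Term.sub? T (Q ++ [d]) = some uP) (hclosed : uP.freeList = []) :
    IsBridge (underlying [] T) (dartOf [] T (Q ++ [d])) := by
  have hPne : Q ++ [d] ≠ [] := by simp
  have hxval := dartOf_val hP
  have hex := e_dartOf hcl hP hPne
  have hPmem : Q ++ [d] ∈ Term.nodes T ∧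
      Term.topIdx T (Q ++ [d]) = 1 + 3 * (Term.nodes T).idxOf (Q ++ [d]) + 2 := by
    cases uP with
    | var y => rw [Term.freeList] at hclosed; cases hclosed
    | app a b => exact ⟨Term.mem_nodes.mpr (Or.inl ⟨a, b, hP⟩), Term.topIdx_app hP⟩
    | lam z b => exact ⟨Term.mem_nodes.mpr (Or.inr ⟨z, b, hP⟩), Term.topIdx_lam hP⟩
  refine ⟨?_, ?_, ?_, ?_⟩
  · -- a real edge
    intro h
    have hv := congrArg Fin.val h
    rw [hex] at hv
    exact Term.dn_ne_top hcl hP hP (hv.trans hxval).symm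
  · -- not the root dart
    intro h
    have hv := congrArg Fin.val h
    rw [hxval, root_val] at hv
    have := Term.dnIdx_pos hP
    omega
  · -- not the other end of the root wire
    intro h
    have hv := congrArg Fin.val h
    rw [hxval, e_root_eq hcl] at hv
    exact Term.dn_ne_top hcl hP (Term.sub?_nil T) hv
  · -- removal disconnects
    intro hcon
    set P := Q ++ [d] with hPdef
    have inv : ∀ a b, EdgeConn (underlying [] T) (dartOf [] T P) a b →
        (Sv T P a.val ↔ Sv T P b.val) := by
      intro a b h
      induction h with
      | rel a b hr =>
        rcases hr with hv | ⟨he, hne1, hne2⟩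
        · rcases Nat.eq_zero_or_pos a.val with h0 | hpos
          · have hva : (underlying [] T).v a = a := by
              show (if a.val = 0 then a else _) = a
              exact if_pos h0
            rw [← hv, hva]
          · obtain ⟨j, i, hj, hi, hav⟩ : ∃ j i, j < (Term.nodes T).length ∧ i < 3 ∧
                a.val = 1 + 3 * j + i :=
              ⟨(a.val - 1) / 3, (a.val - 1) % 3, by have := a.isLt; omega, by omega,
                by have := a.isLt; omega⟩
            have ha : a = ⟨1 + 3 * j + i, by omega⟩ := Fin.ext hav
            rw [ha, v_val_code hj hi (by omega) (by omega)] at hv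
            rw [← hv]
            exact (Sv_code hi hav).trans ((Sv_code (i := (i + 2) % 3) (j := j) (by omega) rfl).symm)
        · have hne1' : a.val ≠ Term.dnIdx T P := by
            intro h
            exact hne1 (Fin.ext (h.trans hxval.symm))
          have hne2' : a.val ≠ Term.topIdx T P := by
            intro h
            apply hne2
            apply Fin.ext
            rw [hex]
            exact h
          obtain ⟨p, u, hpu, hdt⟩ := Term.dart_classify hcl a.isLt
          have hpne : p ≠ P := by
            rintro rfl
            rcases hdt with h1 | h1
            · exact hne1' h1
            · exact hne2' h1
          have hwi := wire_inv hcl hP hclosed hPne hpu hpne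
          rcases hdt with h1 | h1
          · have hbv : b.val = Term.topIdx T p := by
              rw [← he, e_val, h1]
              have h2 : Term.eIdx T (Term.dnIdx T p) = Term.topIdx T p := by
                rcases Term.eq_nil_or_append p with rfl | ⟨q', dd, rfl⟩
                · rw [Term.dnIdx_nil]; exact Term.eIdx_zero T
                · exact Term.eIdx_dn hpu
              rw [h2]
              exact Nat.mod_eq_of_lt (Term.topIdx_lt hcl hpu)
            rw [h1, hbv]
            exact hwi
          · have hbv : b.val = Term.dnIdx T p := by
              rw [← he, e_val, h1]
              have h2 : Term.eIdx T (Term.topIdx T p) = Term.dnIdx T p := by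
                cases u with
                | var y =>
                  obtain ⟨s, hb⟩ := Term.binder_total hcl hpu
                  exact Term.eIdx_top_var hcl hpu hb
                | app a' b' => exact Term.eIdx_top_app hpu
                | lam z' b' => exact Term.eIdx_top_lam hpu
              rw [h2]
              exact Nat.mod_eq_of_lt (Term.dnIdx_lt hpu)
            rw [h1, hbv]
            exact hwi.symm
      | refl a => exact Iff.rfl
      | symm a b _ ih => exact ih.symm
      | trans a b c _ _ ih1 ih2 => exact ih1.trans ih2
    have h1 := inv ⟨Term.topIdx T P, Term.topIdx_lt hcl hP⟩ (underlying [] T).root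
      (hcon _ _)
    have htrue : Sv T P (Term.topIdx T P) := by
      rw [hPmem.2]
      exact (Sv_port hPmem.1 (by omega : (2:ℕ) < 3)).mpr (List.prefix_refl P)
    exact Sv_zero (h1.mp htrue)

theorem e_val_wire {T u : Term} {p : List Bool} (hcl : Linear [] T)
    (hpu : Term.sub? T p = some u) (x : (underlying [] T).carrier)
    (hdt : x.val = Term.dnIdx T p ∨ x.val = Term.topIdx T p) :
    ((underlying [] T).e x).val = Term.dnIdx T p ∨
    ((underlying [] T).e x).val = Term.topIdx T p := by
  rcases hdt with h1 | h1
  · right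
    rw [e_val, h1]
    have h2 : Term.eIdx T (Term.dnIdx T p) = Term.topIdx T p := by
      rcases Term.eq_nil_or_append p with rfl | ⟨q', dd, rfl⟩
      · rw [Term.dnIdx_nil]; exact Term.eIdx_zero T
      · exact Term.eIdx_dn hpu
    rw [h2]
    exact Nat.mod_eq_of_lt (Term.topIdx_lt hcl hpu)
  · left
    rw [e_val, h1]
    have h2 : Term.eIdx T (Term.topIdx T p) = Term.dnIdx T p := by
      cases u with
      | var y =>
        obtain ⟨s, hb⟩ := Term.binder_total hcl hpu
        exact Term.eIdx_top_var hcl hpu hb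
      | app a' b' => exact Term.eIdx_top_app hpu
      | lam z' b' => exact Term.eIdx_top_lam hpu
    rw [h2]
    exact Nat.mod_eq_of_lt (Term.dnIdx_lt hpu)

theorem not_bridge_of_open {T uP : Term} {P : List Bool} (hcl : Linear [] T)
    (hP : Term.sub? T P = some uP) (hPne : P ≠ []) (hopen : uP.freeList ≠ [])
    (x : (underlying [] T).carrier)
    (hx1 : x.val = Term.dnIdx T P ∨ x.val = Term.topIdx T P) :
    ∀ a b, EdgeConn (underlying [] T) x a b := by
  refine conn_all hcl hP hPne ?_ x hx1 (e_val_wire hcl hP x hx1)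
  intro hPn
  obtain ⟨y, hy⟩ : ∃ y, y ∈ uP.freeList := by
    cases h : uP.freeList with
    | nil => exact absurd h hopen
    | cons a l => exact ⟨a, by simp [h]⟩
  obtain ⟨r, hf⟩ := Term.mem_freeList_iff.mp hy
  have hocc : Term.sub? T (P ++ r) = some (Term.var y) := by
    rw [Term.sub?_append, hP]
    simpa using hf.1
  have hrne : r ≠ [] := by
    rintro rfl
    have h1 := hf.1
    rw [Term.sub?_nil] at h1
    cases Option.some.inj h1
    rcases Term.mem_nodes.mp hPn with ⟨a, b, h⟩ | ⟨z, b, h⟩ <;> rw [hP] at h <;> simp at h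
  obtain ⟨s, hb⟩ := Term.binder_total hcl hocc
  have hbp : Term.prefF T y P = some s := by
    rw [Term.binderPos_eq_prefF hocc, Term.prefF_append hP, hf.2] at hb
    simpa using hb
  obtain ⟨hpre, hlen, bs, hs⟩ := Term.prefF_prefix hbp
  exact ⟨y, r, s, bs, hrne, hocc, hb, hs, hpre, fun h => by rw [h] at hlen; omega⟩

theorem linear_lift {Γ : List ℕ} {t : Term} (h : Linear Γ t) :
    Linear [] (lambdaLift Γ t) := by
  induction Γ using List.reverseRecOn generalizing t with
  | nil => exact h
  | append_singleton Γ' x ih =>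
    have heq : lambdaLift (Γ' ++ [x]) t = lambdaLift Γ' (Term.lam x t) := by
      simp [lambdaLift, List.foldr_append]
    rw [heq]
    exact ih (Linear.lam h)

theorem sub?_lift (Γ : List ℕ) (t : Term) :
    Term.sub? (lambdaLift Γ t) (List.replicate Γ.length false) = some t := by
  induction Γ with
  | nil => exact Term.sub?_nil t
  | cons x Γ' ih =>
    show Term.sub? (Term.lam x (lambdaLift Γ' t))
      (List.replicate (Γ'.length + 1) false) = some t
    rw [List.replicate_succ]
    simpa [Term.sub?] using ih

theorem app_pos_lift {Γ : List ℕ} {t a b : Term} {Q : List Bool}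
    (h : Term.sub? (lambdaLift Γ t) Q = some (Term.app a b)) :
    ∃ q, Q = List.replicate Γ.length false ++ q ∧ Term.sub? t q = some (Term.app a b) := by
  induction Γ generalizing Q with
  | nil => exact ⟨Q, by simp, h⟩
  | cons x Γ' ih =>
    cases Q with
    | nil =>
      rw [Term.sub?_nil] at h
      exact absurd (Option.some.inj h) (by simp [lambdaLift])
    | cons c Q' =>
      cases c with
      | false =>
        obtain ⟨q, rfl, hq⟩ := ih (by simpa [lambdaLift, Term.sub?] using h)
        exact ⟨q, by simp [List.replicate_succ], hq⟩
      | true =>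
        exfalso
        have : Term.sub? (Term.lam x (lambdaLift Γ' t)) (true :: Q') = some (Term.app a b) := h
        simp [Term.sub?] at this

/-- Let `(Γ, t)` be a linear lambda term and let `u` be a subterm occurrence
of `t` that is the function or the argument of an application occurring in
`t`.  Then the edge corresponding to `u` in the underlying rooted trivalent
map of the lambda lifting of `(Γ, t)` is a bridge if and only if `u` is
closed.  Moreover, every bridge of that map arises in this way. -/
theorem bridges_correspond_to_closed_subterms :
    ∀ (Γ : List ℕ) (t : Term), Linear Γ t →
      (∀ (q : List Bool) (d : Bool) (t₁ t₂ u : Term),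
        Term.sub? t q = some (.app t₁ t₂) →
        Term.sub? t (q ++ [d]) = some u →
        (IsBridge (underlying [] (lambdaLift Γ t))
            (dartOf [] (lambdaLift Γ t)
              (List.replicate Γ.length false ++ (q ++ [d]))) ↔
         u.freeList = [])) ∧
      (∀ x : (underlying [] (lambdaLift Γ t)).carrier,
        IsBridge (underlying [] (lambdaLift Γ t)) x →
        ∃ (q : List Bool) (d : Bool) (t₁ t₂ u : Term),
          Term.sub? t q = some (.app t₁ t₂) ∧
          Term.sub? t (q ++ [d]) = some u ∧
          (x = dartOf [] (lambdaLift Γ t)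
                 (List.replicate Γ.length false ++ (q ++ [d])) ∨
           x = (underlying [] (lambdaLift Γ t)).e
                 (dartOf [] (lambdaLift Γ t)
                   (List.replicate Γ.length false ++ (q ++ [d]))))) := by
  intro Γ t hL
  have hcl : Linear [] (lambdaLift Γ t) := linear_lift hL
  constructor
  · intro q d t₁ t₂ u hq hu
    have hQ : Term.sub? (lambdaLift Γ t) (List.replicate Γ.length false ++ q)
        = some (Term.app t₁ t₂) := by
      rw [Term.sub?_append, sub?_lift Γ t]
      simpa using hq
    have hP : Term.sub? (lambdaLift Γ t) (List.replicate Γ.length false ++ (q ++ [d]))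
        = some u := by
      rw [Term.sub?_append, sub?_lift Γ t]
      simpa using hu
    have hassoc : List.replicate Γ.length false ++ (q ++ [d])
        = (List.replicate Γ.length false ++ q) ++ [d] := (List.append_assoc _ _ _).symm
    constructor
    · intro hbr
      by_contra hne
      exact hbr.2.2.2 (not_bridge_of_open hcl hP (by simp) hne _
        (Or.inl (dartOf_val hP)))
    · intro hclosed
      rw [hassoc] at hP ⊢
      exact bridge_of_closed hcl hQ hP hclosed
  · intro x hx
    obtain ⟨hreal, hroot, heroot, hncon⟩ := hx
    obtain ⟨p, u, hpu, hdt⟩ := Term.dart_classify hcl x.isLt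
    have hpne : p ≠ [] := by
      rintro rfl
      rcases hdt with h1 | h1
      · rw [Term.dnIdx_nil] at h1
        exact hroot (Fin.ext h1)
      · apply heroot
        apply Fin.ext
        rw [e_root_eq hcl]
        exact h1
    obtain ⟨q', d', rfl⟩ : ∃ q' d', p = q' ++ [d'] := by
      rcases Term.eq_nil_or_append p with rfl | h
      · exact absurd rfl hpne
      · exact h
    obtain ⟨hq'mem, hshape⟩ := Term.parent_node hpu
    rcases hshape with ⟨a, b, hq'⟩ | ⟨z, b, hq', rfl, rfl⟩
    · obtain ⟨q, rfl, hqt⟩ := app_pos_lift hq'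
      refine ⟨q, d', a, b, u, hqt, ?_, ?_⟩
      · have h2 := hpu
        rw [List.append_assoc, Term.sub?_append, sub?_lift Γ t] at h2
        simpa using h2
      · have hPform : List.replicate Γ.length false ++ (q ++ [d'])
            = (List.replicate Γ.length false ++ q) ++ [d'] := (List.append_assoc _ _ _).symm
        rcases hdt with h1 | h1
        · left
          apply Fin.ext
          rw [hPform, dartOf_val hpu]
          exact h1
        · right
          apply Fin.ext
          rw [hPform, e_dartOf hcl hpu (by simp)]
          exact h1
    · -- the wire of the body of an abstraction is never a bridge
      exfalso
      apply hncon
      have hz : z ∈ Term.freeList u := Term.lam_node_free hcl hq'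
      exact not_bridge_of_open hcl hpu (by simp) (List.ne_nil_of_mem hz) x hdt
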